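/- For λ > 0, the function x ↦ D_{−λ}(x) = (1/Γ(λ)) e^{−x²/4} ∫₀^∞ t^{λ−1} e^{−xt − t²/2} dt is strictly decreasing on [0, ∞). -/
import Mathlib

noncomputable def Dpc (l x : ℝ) : ℝ :=
  (1 / Real.Gamma l) * Real.exp (-x^2/4) *
    ∫ t in Set.Ioi (0:ℝ), t ^ (l - 1) * Real.exp (-x*t - t^2/2)

open MeasureTheory Real Set
open scoped ENNReal

lemma Dpc_integrable (l x : ℝ) (hl : 0 < l) (hx : 0 ≤ x) :
    IntegrableOn (fun t : ℝ => t ^ (l - 1) * Real.exp (-x*t - t^2/2)) (Ioi 0) := by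
  have hbase : IntegrableOn (fun t : ℝ => t ^ (l - 1) * Real.exp (-(1/2) * t ^ 2)) (Ioi 0) :=
    integrableOn_rpow_mul_exp_neg_mul_sq (by norm_num) (by linarith)
  refine hbase.mono' ?_ ?_
  · apply Measurable.aestronglyMeasurable
    fun_prop
  · filter_upwards [ae_restrict_mem measurableSet_Ioi] with t ht
    have ht0 : 0 < t := ht
    rw [Real.norm_eq_abs, abs_mul, abs_of_nonneg (Real.rpow_nonneg ht0.le _),
      abs_of_nonneg (Real.exp_pos _).le]
    apply mul_le_mul_of_nonneg_left _ (Real.rpow_nonneg ht0.le _)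
    apply Real.exp_le_exp.mpr
    nlinarith [mul_nonneg hx ht0.le]

lemma Dpc_integral_pos (l x : ℝ) (hl : 0 < l) (hx : 0 ≤ x) :
    0 < ∫ t in Ioi (0:ℝ), t ^ (l - 1) * Real.exp (-x*t - t^2/2) := by
  rw [setIntegral_pos_iff_support_of_nonneg_ae]
  · have hsub : Ioi (0:ℝ) ⊆
        Function.support (fun t : ℝ => t ^ (l - 1) * Real.exp (-x*t - t^2/2)) := by
      intro t ht
      exact (mul_pos (Real.rpow_pos_of_pos ht _) (Real.exp_pos _)).ne'
    calc (0:ℝ≥0∞) < volume (Ioi (0:ℝ)) := by simp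
      _ ≤ _ := measure_mono (subset_inter hsub (subset_refl _))
  · filter_upwards [ae_restrict_mem measurableSet_Ioi] with t ht
    exact mul_nonneg (Real.rpow_nonneg (le_of_lt ht) _) (Real.exp_pos _).le
  · exact Dpc_integrable l x hl hx

theorem Dpc_strictAnti (l : ℝ) (hl : 0 < l) :
    StrictAntiOn (Dpc l) (Set.Ici 0) := by
  intro x hx y hy hxy
  simp only [Set.mem_Ici] at hx hy
  have hI : (∫ t in Ioi (0:ℝ), t ^ (l - 1) * Real.exp (-y*t - t^2/2)) ≤
      ∫ t in Ioi (0:ℝ), t ^ (l - 1) * Real.exp (-x*t - t^2/2) := by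
    refine setIntegral_mono_on (Dpc_integrable l y hl hy) (Dpc_integrable l x hl hx)
      measurableSet_Ioi (fun t ht => ?_)
    have ht0 : 0 < t := ht
    apply mul_le_mul_of_nonneg_left _ (Real.rpow_nonneg ht0.le _)
    apply Real.exp_le_exp.mpr
    nlinarith
  have hIy := Dpc_integral_pos l y hl hy
  have hA : Real.exp (-y^2/4) < Real.exp (-x^2/4) := by
    apply Real.exp_lt_exp.mpr; nlinarith
  have hΓ : 0 < 1 / Real.Gamma l := by
    have := Real.Gamma_pos_of_pos hl; positivity
  unfold Dpc
  calc (1 / Real.Gamma l) * Real.exp (-y^2/4) *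
        ∫ t in Ioi (0:ℝ), t ^ (l - 1) * Real.exp (-y*t - t^2/2)
      < (1 / Real.Gamma l) * Real.exp (-x^2/4) *
        ∫ t in Ioi (0:ℝ), t ^ (l - 1) * Real.exp (-y*t - t^2/2) := by
        exact mul_lt_mul_of_pos_right (mul_lt_mul_of_pos_left hA hΓ) hIy
    _ ≤ _ := by
        apply mul_le_mul_of_nonneg_left hI
        positivity
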